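/- Let A ∈ M_m(K), and let (r,s) be the position of a marked entry of A that is minimal with respect to the ordering by row numbers (i.e. r ≤ r′ for every marked position (r′,s′) of A). Then there exist an invertible lower triangular matrix C ∈ GL_m(K) whose off-diagonal entries in the r-th row are all zero (C_{rk} = 0 for k ≠ r) and an upper triangular matrix D ∈ M_m(K) with Dᵢᵢ = Cᵢᵢ⁻¹ for all i and whose off-diagonal entries in the s-th column are all zero (D_{ls} = 0 for l ≠ s), such that B = C A D satisfies B_{rj} = 0 for all j ≠ s and B_{is} = 0 for all i ≠ r. -/

import Mathlib

open Matrix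

/-- An entry of `A` at position `(r,s)` is *marked* if it is nonzero and all other
entries `A i j` with `i ≤ r`, `j ≤ s` vanish. -/
def Marked {K : Type*} [Field K] {m : ℕ} (A : Matrix (Fin m) (Fin m) K)
    (r s : Fin m) : Prop :=
  A r s ≠ 0 ∧ ∀ i j : Fin m, i ≤ r → j ≤ s → (i, j) ≠ (r, s) → A i j = 0

/-- Lemma 3.6: for a row-minimal marked entry, the clearing transformation of
Lemma 3.4 can be chosen with all off-diagonal entries of the `r`-th row of `C`
and of the `s`-th column of `D` equal to zero. -/
theorem stmt_9 {K : Type*} [Field K] {m : ℕ}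
    (A : Matrix (Fin m) (Fin m) K) (r s : Fin m) (hrs : Marked A r s)
    (hmin : ∀ r' s' : Fin m, Marked A r' s' → r ≤ r') :
    ∃ C D : Matrix (Fin m) (Fin m) K,
      IsUnit C ∧ (∀ i j : Fin m, i < j → C i j = 0) ∧
      (∀ k : Fin m, k ≠ r → C r k = 0) ∧
      (∀ i j : Fin m, j < i → D i j = 0) ∧
      (∀ i : Fin m, D i i = (C i i)⁻¹) ∧
      (∀ l : Fin m, l ≠ s → D l s = 0) ∧
      (∀ j : Fin m, j ≠ s → (C * A * D) r j = 0) ∧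
      (∀ i : Fin m, i ≠ r → (C * A * D) i s = 0) := by
  obtain ⟨hA, hzero⟩ := hrs
  set E : Matrix (Fin m) (Fin m) K :=
    fun i j => if i ≠ j ∧ j = r then -(A i s / A r s) else 0 with hE
  set F : Matrix (Fin m) (Fin m) K :=
    fun i j => if i ≠ j ∧ i = s then -(A r j / A r s) else 0 with hF
  have hErow : ∀ k, E r k = 0 := by
    intro k
    simp only [hE]
    split
    · next h => exact absurd (h.2 ▸ rfl) h.1
    · rfl
  have hFcol : ∀ k, F k s = 0 := by
    intro k
    simp only [hF]
    split
    · next h => exact absurd (h.2 ▸ rfl) h.1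
    · rfl
  have hEcol : ∀ i k, k ≠ r → E i k = 0 := by
    intro i k hk
    simp only [hE]
    rw [if_neg (fun h => hk h.2)]
  have hFrow : ∀ k j, k ≠ s → F k j = 0 := by
    intro k j hk
    simp only [hF]
    rw [if_neg (fun h => hk h.2)]
  -- products with E and F
  have hEM : ∀ (M : Matrix (Fin m) (Fin m) K) i j, (E * M) i j = E i r * M r j := by
    intro M i j
    rw [Matrix.mul_apply]
    exact Finset.sum_eq_single r (fun k _ hk => by rw [hEcol i k hk, zero_mul])
      (fun h => absurd (Finset.mem_univ r) h)
  have hMF : ∀ (M : Matrix (Fin m) (Fin m) K) i j, (M * F) i j = M i s * F s j := by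
    intro M i j
    rw [Matrix.mul_apply]
    exact Finset.sum_eq_single s (fun k _ hk => by rw [hFrow k j hk, mul_zero])
      (fun h => absurd (Finset.mem_univ s) h)
  have hEE : E * E = 0 := by
    ext i j
    rw [hEM, hErow, mul_zero]
    rfl
  refine ⟨1 + E, 1 + F, ?_, ?_, ?_, ?_, ?_, ?_, ?_, ?_⟩
  · -- IsUnit
    have h1 : (1 + E) * (1 - E) = 1 := by
      rw [mul_sub, mul_one, add_mul, one_mul, hEE, add_zero, add_sub_cancel_right]
    have h2 : (1 - E) * (1 + E) = 1 := by
      rw [sub_mul, one_mul, mul_add, mul_one, hEE, add_zero, add_sub_cancel_right]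
    exact ⟨⟨1 + E, 1 - E, h1, h2⟩, rfl⟩
  · -- lower triangular
    intro i j hij
    have hne : i ≠ j := ne_of_lt hij
    simp only [Matrix.add_apply, Matrix.one_apply_ne hne, zero_add]; simp only [hE]
    by_cases hjr : j = r
    · subst hjr
      have hAis : A i s = 0 := by
        apply hzero i s hij.le le_rfl
        intro hc
        exact absurd (Prod.ext_iff.mp hc).1 (ne_of_lt hij)
      rw [if_pos ⟨hne, rfl⟩, hAis, zero_div, neg_zero]
    · rw [if_neg (fun h => hjr h.2)]
  · -- row r of C
    intro k hk
    rw [Matrix.add_apply, Matrix.one_apply_ne (Ne.symm hk), hErow, add_zero]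
  · -- upper triangular D
    intro i j hji
    have hne : i ≠ j := (ne_of_lt hji).symm
    simp only [Matrix.add_apply, Matrix.one_apply_ne hne, zero_add]; simp only [hF]
    by_cases his : i = s
    · subst his
      have hArj : A r j = 0 := by
        apply hzero r j le_rfl hji.le
        intro hc
        exact absurd (Prod.ext_iff.mp hc).2 (ne_of_lt hji)
      rw [if_pos ⟨hne, rfl⟩, hArj, zero_div, neg_zero]
    · rw [if_neg (fun h => his h.2)]
  · -- diagonal
    intro i
    rw [Matrix.add_apply, Matrix.add_apply, Matrix.one_apply_eq]
    simp [hE, hF]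
  · -- column s of D
    intro l hl
    rw [Matrix.add_apply, Matrix.one_apply_ne hl, hFcol, add_zero]
  · -- row r of B
    intro j hj
    have expand : (1 + E) * A * (1 + F) = A + E * A + (A * F + E * A * F) := by
      noncomm_ring
    rw [expand]
    simp only [Matrix.add_apply]
    rw [hEM A r j, hErow, hMF A r j, hMF (E * A) r j, hEM A r s, hErow]
    have hFsj : F s j = -(A r j / A r s) := by
      simp [hF, Ne.symm hj]
    rw [hFsj]
    field_simp
    ring
  · -- column s of B
    intro i hi
    have expand : (1 + E) * A * (1 + F) = A + E * A + (A * F + E * A * F) := by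
      noncomm_ring
    rw [expand]
    simp only [Matrix.add_apply]
    rw [hMF A i s, hFcol, hMF (E * A) i s, hFcol, hEM A i s]
    have hEir : E i r = -(A i s / A r s) := by
      simp [hE, hi]
    rw [hEir]
    field_simp
    ring
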